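/- Rounding lemma for the FPTAS: let each project-degree d have score s(d) ∈ ℕ with maximum M = max_d s(d), fix ε ∈ (0,1) and m ≥ 1, and define rounded scores s'(d) = ⌊s(d)·m/(ε·M)⌋. If O and S are valid sets (each with at most m degrees of positive score), S maximizes ∑_{d∈S} s'(d) among valid sets, and M ≤ ∑_{d∈O} s(d), then ∑_{d∈S} s(d) ≥ (1−ε)·∑_{d∈O} s(d). -/

import Mathlib

open Finset

section PBDefs

variable {V D P : Type*}

/-- A valid outcome: exactly one degree chosen per project, total cost within budget. -/
def ValidSet [DecidableEq P] (proj : D → P) (c : D → ℕ) (b : ℕ) (S : Finset D) : Prop :=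
  (∀ j : P, (S.filter fun d => proj d = j).card = 1) ∧ ∑ d ∈ S, c d ≤ b

/-- The cost of the degree of project `j` chosen in `S`. -/
def chosenCost [DecidableEq P] (proj : D → P) (c : D → ℕ) (S : Finset D) (j : P) : ℕ :=
  ∑ d ∈ S.filter (fun d => proj d = j), c d

/-- Total cardinal utility (rule `R_{|S|}`): a voter gets 1 from project `j` iff the
chosen cost is nonzero and within her bounds. -/
def cardUtilTotal [Fintype V] [Fintype P] [DecidableEq P] (proj : D → P) (c : D → ℕ)
    (l u : V → P → ℕ) (S : Finset D) : ℕ :=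
  ∑ i : V, (univ.filter fun j : P =>
    chosenCost proj c S j ≠ 0 ∧ l i j ≤ chosenCost proj c S j ∧
      chosenCost proj c S j ≤ u i j).card

/-- Total cost utility (rule `R_{c(S)}`). -/
def costUtilTotal [Fintype V] [Fintype P] [DecidableEq P] (proj : D → P) (c : D → ℕ)
    (l u : V → P → ℕ) (S : Finset D) : ℕ :=
  ∑ i : V, ∑ j : P,
    if l i j ≤ chosenCost proj c S j ∧ chosenCost proj c S j ≤ u i j then
      chosenCost proj c S j else 0

/-- Total cost-capped utility (rule `R_{ĉ(S)}`). -/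
def cappedUtilTotal [Fintype V] [Fintype P] [DecidableEq P] (proj : D → P) (c : D → ℕ)
    (l u : V → P → ℕ) (S : Finset D) : ℕ :=
  ∑ i : V, ∑ j : P,
    if chosenCost proj c S j < l i j then 0
    else if chosenCost proj c S j ≤ u i j then chosenCost proj c S j
    else u i j

/-- Total distance disutility (rule `R_{‖·‖}`): distance of the chosen cost to the
interval `[l i j, u i j]`, via truncated subtraction (`max(l-c,0)+max(c-u,0)`). -/
def disTotal [Fintype V] [Fintype P] [DecidableEq P] (proj : D → P) (c : D → ℕ)
    (l u : V → P → ℕ) (S : Finset D) : ℕ :=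
  ∑ i : V, ∑ j : P,
    ((l i j - chosenCost proj c S j) + (chosenCost proj c S j - u i j))

/-- `τ_j`: the set of costs of degrees of project `j` unanimously acceptable to all voters. -/
def tauSet [Fintype V] [Fintype D] [DecidableEq P] (proj : D → P) (c : D → ℕ)
    (l u : V → P → ℕ) (j : P) : Finset ℕ :=
  ((univ : Finset D).filter fun d => proj d = j ∧ ∀ i : V, l i j ≤ c d ∧ c d ≤ u i j).image c

/-- Disutility contribution `q(d)` of a degree `d`. -/
def qContrib [Fintype V] (proj : D → P) (c : D → ℕ) (l u : V → P → ℕ) (d : D) : ℕ :=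
  (∑ i ∈ univ.filter (fun i : V => c d < l i (proj d)), (l i (proj d) - c d))
  + ∑ i ∈ univ.filter (fun i : V => u i (proj d) < c d), (c d - u i (proj d))

end PBDefs

/-- rounding lemma for the FPTAS for `R_{c(S)}`. -/
theorem fptas_rounding {D : Type*} (Valid : Finset D → Prop)
    (s : D → ℕ) (M m : ℕ) (ε : ℝ)
    (hε0 : 0 < ε) (hε1 : ε < 1) (hm : 1 ≤ m)
    (hMub : ∀ d, s d ≤ M) (hMeq : ∃ d, s d = M)
    (s' : D → ℕ) (hs' : ∀ d, s' d = ⌊((s d : ℝ) * m) / (ε * M)⌋₊)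
    (O S : Finset D) (hO : Valid O) (hSv : Valid S)
    (hOcard : O.card ≤ m) (hScard : S.card ≤ m)
    (hmax : ∀ T : Finset D, Valid T → ∑ d ∈ T, s' d ≤ ∑ d ∈ S, s' d)
    (hMopt : (M : ℝ) ≤ ∑ d ∈ O, (s d : ℝ)) :
    (1 - ε) * (∑ d ∈ O, (s d : ℝ)) ≤ ∑ d ∈ S, (s d : ℝ) := by
  rcases Nat.eq_zero_or_pos M with hM0 | hMpos
  · have hO0 : ∑ d ∈ O, (s d : ℝ) = 0 := by
      apply Finset.sum_eq_zero
      intro d _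
      have := hMub d
      have : s d = 0 := by omega
      simp [this]
    rw [hO0]
    have : 0 ≤ ∑ d ∈ S, (s d : ℝ) := Finset.sum_nonneg fun d _ => by positivity
    linarith
  · set c : ℝ := ε * M / m with hc
    have hMR : (0:ℝ) < M := by exact_mod_cast hMpos
    have hmR : (0:ℝ) < m := by exact_mod_cast hm
    have hcpos : 0 < c := by positivity
    have hA : ∀ d, (s d : ℝ) ≤ c * ((s' d : ℝ) + 1) := by
      intro d
      rw [hs' d]
      have h1 : ((s d : ℝ) * m) / (ε * M) < (⌊((s d : ℝ) * m) / (ε * M)⌋₊ : ℝ) + 1 :=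
        Nat.lt_floor_add_one _
      have h2 : (s d : ℝ) = c * (((s d : ℝ) * m) / (ε * M)) := by
        field_simp [hc]
        rw [hc]; field_simp
      have := mul_lt_mul_of_pos_left h1 hcpos
      linarith
    have hB : ∀ d, c * (s' d : ℝ) ≤ (s d : ℝ) := by
      intro d
      rw [hs' d]
      have hx : (0:ℝ) ≤ ((s d : ℝ) * m) / (ε * M) := by positivity
      have h1 : (⌊((s d : ℝ) * m) / (ε * M)⌋₊ : ℝ) ≤ ((s d : ℝ) * m) / (ε * M) :=
        Nat.floor_le hx
      have h2 : (s d : ℝ) = c * (((s d : ℝ) * m) / (ε * M)) := by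
        field_simp [hc]
        rw [hc]; field_simp
      have := mul_le_mul_of_nonneg_left h1 hcpos.le
      linarith
    have step1 : ∑ d ∈ O, (s d : ℝ) ≤ c * (∑ d ∈ O, (s' d : ℝ)) + c * O.card := by
      calc ∑ d ∈ O, (s d : ℝ) ≤ ∑ d ∈ O, c * ((s' d : ℝ) + 1) :=
            Finset.sum_le_sum fun d _ => hA d
        _ = c * (∑ d ∈ O, (s' d : ℝ)) + c * O.card := by
            rw [Finset.sum_congr rfl (fun d _ => mul_add c _ 1)]
            rw [Finset.sum_add_distrib, Finset.mul_sum, Finset.sum_const, nsmul_eq_mul]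
            ring
    have step2 : (∑ d ∈ O, (s' d : ℝ)) ≤ ∑ d ∈ S, (s' d : ℝ) := by
      exact_mod_cast Nat.cast_le.mpr (hmax O hO)
    have step3 : c * (∑ d ∈ S, (s' d : ℝ)) ≤ ∑ d ∈ S, (s d : ℝ) := by
      rw [Finset.mul_sum]
      exact Finset.sum_le_sum fun d _ => hB d
    have hcm : c * m = ε * M := by
      rw [hc]; field_simp
    have hcard : c * O.card ≤ ε * M := by
      have : (O.card : ℝ) ≤ m := by exact_mod_cast hOcard
      nlinarith
    have key : ∑ d ∈ O, (s d : ℝ) ≤ ∑ d ∈ S, (s d : ℝ) + ε * M := by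
      have := mul_le_mul_of_nonneg_left step2 hcpos.le
      linarith
    have hεM : ε * M ≤ ε * ∑ d ∈ O, (s d : ℝ) :=
      mul_le_mul_of_nonneg_left hMopt hε0.le
    nlinarith
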